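/- Let q be a nonzero complex number with |q| ≠ 1, and define the q-Dunkl operator D_i^q on polynomials in n real variables by D_i^q f = (q^{μ_i}/(q−q⁻¹)) (T_{q,i}f − r_i f)/x_i − (q^{−μ_i}/(q−q⁻¹)) (T_{q,i}⁻¹f − r_i f)/x_i, where T_{q,i} scales the i-th variable by q, and r_i f(x₁,…,xₙ) = f(x₁,…,−x_i,…,xₙ). Then for i ≠ j the operators commute: D_i^q D_j^q = D_j^q D_i^q on polynomials. -/

import Mathlib

open MvPolynomial

/-- The operator rescaling the `i`-th variable by `c` (e.g. the q-shift `T_{q,i}` for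
`c = q`, or the reflection `r_i` for `c = -1`). -/
noncomputable def varScale (n : ℕ) (c : ℂ) (i : Fin n) :
    MvPolynomial (Fin n) ℂ →ₐ[ℂ] MvPolynomial (Fin n) ℂ :=
  aeval (fun j => if j = i then c • X j else X j)

/-- Formal division by the variable `x_i` (valid on polynomials each of whose monomials
contains a positive power of `x_i`). -/
noncomputable def divXi (n : ℕ) (i : Fin n) (f : MvPolynomial (Fin n) ℂ) :
    MvPolynomial (Fin n) ℂ :=
  ∑ α ∈ f.support, monomial (α - Finsupp.single i 1) (coeff α f)

/-- The `ℤ₂ⁿ` q-Dunkl operator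
`D_i^q = (q^{μ_i}/(q−q⁻¹)) (T_{q,i} − r_i)/x_i − (q^{−μ_i}/(q−q⁻¹)) (T_{q,i}⁻¹ − r_i)/x_i`. -/
noncomputable def qDunkl (n : ℕ) (q : ℂ) (μ : Fin n → ℝ) (i : Fin n)
    (f : MvPolynomial (Fin n) ℂ) : MvPolynomial (Fin n) ℂ :=
  (q ^ ((μ i : ℝ) : ℂ) / (q - q⁻¹)) • divXi n i (varScale n q i f - varScale n (-1) i f)
    - (q ^ ((-(μ i) : ℝ) : ℂ) / (q - q⁻¹)) • divXi n i (varScale n q⁻¹ i f - varScale n (-1) i f)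

lemma varScale_monomial (n : ℕ) (c : ℂ) (i : Fin n) (α : Fin n →₀ ℕ) (a : ℂ) :
    varScale n c i (monomial α a) = c ^ (α i) • monomial α a := by
  classical
  rw [varScale, aeval_monomial, Finsupp.prod, smul_monomial]
  rw [Finset.prod_congr rfl (fun j _ => show (if j = i then c • X j else X j) ^ α j
      = C (if j = i then c ^ α j else 1) * X j ^ α j by
    split
    · rw [Algebra.smul_def, algebraMap_eq, mul_pow, ← C_pow]
    · rw [map_one, one_mul])]
  rw [Finset.prod_mul_distrib, ← map_prod, Finset.prod_ite_eq' α.support i (fun j => c ^ α j)]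
  have h : (if i ∈ α.support then c ^ α i else 1) = c ^ α i := by
    split
    · rfl
    · rw [Finsupp.notMem_support_iff.mp (by assumption), pow_zero]
  rw [h, monomial_eq, Finsupp.prod, algebraMap_eq, smul_eq_mul, C_mul]
  ring
lemma divXi_eq (n : ℕ) (i : Fin n) (f : MvPolynomial (Fin n) ℂ) (S : Finset (Fin n →₀ ℕ))
    (h : f.support ⊆ S) :
    divXi n i f = ∑ α ∈ S, monomial (α - Finsupp.single i 1) (coeff α f) := by
  rw [divXi]
  exact Finset.sum_subset h (fun α _ hα => by
    rw [MvPolynomial.notMem_support_iff.mp hα, map_zero])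

lemma divXi_monomial (n : ℕ) (i : Fin n) (α : Fin n →₀ ℕ) (a : ℂ) :
    divXi n i (monomial α a) = monomial (α - Finsupp.single i 1) a := by
  by_cases ha : a = 0
  · simp [divXi, ha]
  · rw [divXi, support_monomial, if_neg ha, Finset.sum_singleton, coeff_monomial, if_pos rfl]

lemma divXi_add (n : ℕ) (i : Fin n) (f g : MvPolynomial (Fin n) ℂ) :
    divXi n i (f + g) = divXi n i f + divXi n i g := by
  rw [divXi_eq n i (f + g) (f.support ∪ g.support) (MvPolynomial.support_add),
    divXi_eq n i f (f.support ∪ g.support) Finset.subset_union_left,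
    divXi_eq n i g (f.support ∪ g.support) Finset.subset_union_right,
    ← Finset.sum_add_distrib]
  simp [coeff_add]

lemma divXi_smul (n : ℕ) (i : Fin n) (c : ℂ) (f : MvPolynomial (Fin n) ℂ) :
    divXi n i (c • f) = c • divXi n i f := by
  rw [divXi_eq n i (c • f) f.support (MvPolynomial.support_smul), divXi, Finset.smul_sum]
  simp [coeff_smul, smul_monomial]

lemma qDunkl_add (n : ℕ) (q : ℂ) (μ : Fin n → ℝ) (i : Fin n) (f g : MvPolynomial (Fin n) ℂ) :
    qDunkl n q μ i (f + g) = qDunkl n q μ i f + qDunkl n q μ i g := by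
  simp only [qDunkl, map_add]
  have h1 : ∀ A B C D : MvPolynomial (Fin n) ℂ, A + B - (C + D) = (A - C) + (B - D) :=
    fun _ _ _ _ => by ring
  rw [h1, h1, divXi_add, divXi_add, smul_add, smul_add]
  abel

lemma qDunkl_smul (n : ℕ) (q : ℂ) (μ : Fin n → ℝ) (i : Fin n) (c : ℂ)
    (f : MvPolynomial (Fin n) ℂ) :
    qDunkl n q μ i (c • f) = c • qDunkl n q μ i f := by
  simp only [qDunkl, map_smul]
  rw [← smul_sub c, ← smul_sub c, divXi_smul, divXi_smul, smul_comm _ c, smul_comm _ c, smul_sub]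

lemma qDunkl_monomial (n : ℕ) (q : ℂ) (μ : Fin n → ℝ) (i : Fin n) (α : Fin n →₀ ℕ) (a : ℂ) :
    qDunkl n q μ i (monomial α a) =
      ((q ^ ((μ i : ℝ) : ℂ) / (q - q⁻¹)) * (q ^ (α i) - (-1 : ℂ) ^ (α i))
        - (q ^ ((-(μ i) : ℝ) : ℂ) / (q - q⁻¹)) * ((q⁻¹) ^ (α i) - (-1 : ℂ) ^ (α i))) •
        monomial (α - Finsupp.single i 1) a := by
  rw [qDunkl, varScale_monomial, varScale_monomial, varScale_monomial, ← sub_smul, ← sub_smul,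
    divXi_smul, divXi_smul, divXi_monomial, smul_smul, smul_smul, ← sub_smul]

lemma qDunkl_comm_monomial (n : ℕ) (q : ℂ) (μ : Fin n → ℝ) (i j : Fin n) (hij : i ≠ j)
    (α : Fin n →₀ ℕ) (a : ℂ) :
    qDunkl n q μ i (qDunkl n q μ j (monomial α a)) =
      qDunkl n q μ j (qDunkl n q μ i (monomial α a)) := by
  have hji : ((α - Finsupp.single j 1 : Fin n →₀ ℕ)) i = α i := by
    rw [Finsupp.tsub_apply, Finsupp.single_eq_of_ne' hij.symm]; rfl
  have hijx : ((α - Finsupp.single i 1 : Fin n →₀ ℕ)) j = α j := by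
    rw [Finsupp.tsub_apply, Finsupp.single_eq_of_ne' hij]; rfl
  have hidx : α - Finsupp.single j 1 - Finsupp.single i 1
      = α - Finsupp.single i 1 - Finsupp.single j 1 := by
    ext k; simp only [Finsupp.tsub_apply]; omega
  rw [qDunkl_monomial, qDunkl_smul, qDunkl_monomial, qDunkl_monomial, qDunkl_smul,
    qDunkl_monomial, smul_smul, smul_smul, hji, hijx, hidx, mul_comm]

/-- The q-Dunkl operators mutually commute: `D_i^q D_j^q = D_j^q D_i^q` on polynomials. -/
theorem qDunkl_commute (n : ℕ) (q : ℂ) (hq0 : q ≠ 0) (hq1 : ‖q‖ ≠ 1)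
    (μ : Fin n → ℝ) (hμ : ∀ i, 0 < μ i) (i j : Fin n) (hij : i ≠ j)
    (f : MvPolynomial (Fin n) ℂ) :
    qDunkl n q μ i (qDunkl n q μ j f) = qDunkl n q μ j (qDunkl n q μ i f) := by
  induction f using MvPolynomial.induction_on' with
  | monomial α a => exact qDunkl_comm_monomial n q μ i j hij α a
  | add p r hp hr => rw [qDunkl_add, qDunkl_add, qDunkl_add, qDunkl_add, hp, hr]
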